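/- Let G be a finite graph with simple random walk transition matrix M and let B be a real matrix indexed by the vertices of G with |B_{u,v}| \le c_1 M_{u,v} for all u,v and (B M^k)_{v,v} = 0 for all k \ge 0 and all vertices v. For a power series f(z) = \sum_j a_j z^j with radius of convergence greater than 1, define T_G(f) = |G|^{-1/2} \sum_{j \ge 2} a_j (j/2) \sum_{k_1+k_2+2=j,\, k_1,k_2\ge 0} Tr(B M^{k_1} B M^{k_2}). Then this series converges absolutely and |T_G(f)| \le c_1^2 |G|^{1/2} \|f\|_*, where \|f\|_* = \sum_{k \ge 1} k^2 |a_k|. -/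

import Mathlib

open Matrix Finset

/-- For a finite graph `G` with walk matrix `M` and a matrix `B` with
`|B_{u,v}| ≤ c₁ M_{u,v}` and vanishing diagonal entries of `B M^k`, the series defining
`T_G(f) = |G|^{-1/2} ∑_j a_j (j/2) ∑_{k₁+k₂+2=j} Tr(B M^{k₁} B M^{k₂})` converges
absolutely, and `|T_G(f)| ≤ c₁² |G|^{1/2} ‖f‖_*`. -/
theorem T_G_abs_convergent_and_bounded {V : Type*} [Fintype V] [DecidableEq V]
    (G : SimpleGraph V) [DecidableRel G.Adj]
    (M B : Matrix V V ℝ)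
    (hM : ∀ u v : V, M u v = if G.Adj u v then (1 : ℝ) / (G.degree u) else 0)
    (c₁ : ℝ) (hc₁ : 0 < c₁)
    (hBbound : ∀ u v, |B u v| ≤ c₁ * M u v)
    (hBM : ∀ (k : ℕ) (v : V), (B * M ^ k) v v = 0)
    (a : ℕ → ℂ)
    (hf : ∃ r : ℝ, 1 < r ∧ Summable fun k => ‖a k‖ * r ^ k) :
    Summable (fun j : ℕ =>
      ‖a j * ((j : ℂ) / 2) *
        (∑ p ∈ (Finset.range j ×ˢ Finset.range j).filter (fun p => p.1 + p.2 + 2 = j),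
          (B * M ^ p.1 * B * M ^ p.2).trace : ℝ)‖) ∧
    ‖((Real.sqrt (Fintype.card V))⁻¹ : ℝ) *
        ∑' j : ℕ, a j * ((j : ℂ) / 2) *
          (∑ p ∈ (Finset.range j ×ˢ Finset.range j).filter (fun p => p.1 + p.2 + 2 = j),
            (B * M ^ p.1 * B * M ^ p.2).trace : ℝ)‖ ≤
      c₁ ^ 2 * Real.sqrt (Fintype.card V) *
        (∑' k : ℕ, (k : ℝ) ^ 2 * ‖a k‖) := by
  obtain ⟨r, hr, hsum⟩ := hf
  set n : ℕ := Fintype.card V with hn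
  -- basic properties of M
  have hMnn : ∀ u v, 0 ≤ M u v := by
    intro u v; rw [hM]; split <;> positivity
  have hMrow : ∀ u, ∑ v, M u v ≤ 1 := by
    intro u
    have h1 : ∑ v, M u v = ∑ v ∈ Finset.univ.filter (fun w => G.Adj u w),
        (1 / (G.degree u : ℝ)) := by
      rw [Finset.sum_filter]
      exact Finset.sum_congr rfl fun v _ => (hM u v)
    rw [h1, Finset.sum_const, ← SimpleGraph.neighborFinset_eq_filter, nsmul_eq_mul]
    rw [← SimpleGraph.card_neighborFinset_eq_degree]
    by_cases hd : (G.neighborFinset u).card = 0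
    · simp [hd]
    · rw [mul_one_div, div_self (by exact_mod_cast hd)]
  have hPnn : ∀ (k : ℕ) (u v : V), 0 ≤ (M ^ k) u v := by
    intro k
    induction k with
    | zero => intro u v; simp [Matrix.one_apply]; positivity
    | succ k ih =>
      intro u v
      rw [pow_succ, Matrix.mul_apply]
      exact Finset.sum_nonneg fun w _ => mul_nonneg (ih u w) (hMnn w v)
  have hProw : ∀ (k : ℕ) (u : V), ∑ v, (M ^ k) u v ≤ 1 := by
    intro k
    induction k with
    | zero => intro u; simp [Matrix.one_apply]
    | succ k ih =>
      intro u
      rw [pow_succ]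
      calc ∑ v, (M ^ k * M) u v = ∑ w, (M ^ k) u w * ∑ v, M w v := by
            simp only [Matrix.mul_apply, Finset.mul_sum]
            rw [Finset.sum_comm]
        _ ≤ ∑ w, (M ^ k) u w * 1 :=
            Finset.sum_le_sum fun w _ => mul_le_mul_of_nonneg_left (hMrow w) (hPnn k u w)
        _ ≤ 1 := by simpa using ih u
  have hPle : ∀ (k : ℕ) (u v : V), (M ^ k) u v ≤ 1 := fun k u v =>
    le_trans (Finset.single_le_sum (fun w _ => hPnn k u w) (Finset.mem_univ v)) (hProw k u)
  -- entrywise bound on B * M^k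
  have hBMk : ∀ (k : ℕ) (u v : V), |(B * M ^ k) u v| ≤ c₁ * (M ^ (k + 1)) u v := by
    intro k u v
    rw [Matrix.mul_apply]
    calc |∑ w, B u w * (M ^ k) w v| ≤ ∑ w, |B u w * (M ^ k) w v| :=
          Finset.abs_sum_le_sum_abs _ _
      _ ≤ ∑ w, (c₁ * M u w) * (M ^ k) w v := by
          refine Finset.sum_le_sum fun w _ => ?_
          rw [abs_mul, abs_of_nonneg (hPnn k w v)]
          exact mul_le_mul_of_nonneg_right (hBbound u w) (hPnn k w v)
      _ = c₁ * (M ^ (k + 1)) u v := by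
          rw [pow_succ', Matrix.mul_apply, Finset.mul_sum]
          exact Finset.sum_congr rfl fun w _ => by ring
  -- trace bound
  have hTr : ∀ k₁ k₂ : ℕ, |(B * M ^ k₁ * B * M ^ k₂).trace| ≤ c₁ ^ 2 * n := by
    intro k₁ k₂
    have hentry : ∀ v, |(B * M ^ k₁ * B * M ^ k₂) v v| ≤ c₁ ^ 2 := by
      intro v
      have heq : B * M ^ k₁ * B * M ^ k₂ = (B * M ^ k₁) * (B * M ^ k₂) := by
        rw [mul_assoc]
      rw [heq, Matrix.mul_apply]
      calc |∑ w, (B * M ^ k₁) v w * (B * M ^ k₂) w v|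
          ≤ ∑ w, |(B * M ^ k₁) v w| * |(B * M ^ k₂) w v| := by
            refine le_trans (Finset.abs_sum_le_sum_abs _ _) ?_
            exact Finset.sum_le_sum fun w _ => le_of_eq (abs_mul _ _)
        _ ≤ ∑ w, (c₁ * (M ^ (k₁ + 1)) v w) * (c₁ * (M ^ (k₂ + 1)) w v) := by
            refine Finset.sum_le_sum fun w _ => ?_
            exact mul_le_mul (hBMk k₁ v w) (hBMk k₂ w v) (abs_nonneg _)
              (le_trans (abs_nonneg _) (hBMk k₁ v w))
        _ = c₁ ^ 2 * ((M ^ (k₁ + 1)) * (M ^ (k₂ + 1))) v v := by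
            rw [Matrix.mul_apply, Finset.mul_sum]
            exact Finset.sum_congr rfl fun w _ => by ring
        _ ≤ c₁ ^ 2 * 1 := by
            refine mul_le_mul_of_nonneg_left ?_ (by positivity)
            rw [← pow_add]
            exact hPle _ v v
        _ = c₁ ^ 2 := mul_one _
    calc |(B * M ^ k₁ * B * M ^ k₂).trace|
        ≤ ∑ v, |(B * M ^ k₁ * B * M ^ k₂) v v| := Finset.abs_sum_le_sum_abs _ _
      _ ≤ ∑ _v : V, c₁ ^ 2 := Finset.sum_le_sum fun v _ => hentry v
      _ = c₁ ^ 2 * n := by rw [Finset.sum_const, Finset.card_univ, nsmul_eq_mul, mul_comm]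
  -- bound on the inner sum
  have hS : ∀ j : ℕ,
      |(∑ p ∈ (Finset.range j ×ˢ Finset.range j).filter (fun p => p.1 + p.2 + 2 = j),
        (B * M ^ p.1 * B * M ^ p.2).trace)| ≤ (c₁ ^ 2 * n) * j := by
    intro j
    set s := (Finset.range j ×ˢ Finset.range j).filter (fun p => p.1 + p.2 + 2 = j) with hs
    have hcard : s.card ≤ j := by
      have := Finset.card_le_card_of_injOn (s := s) (t := Finset.range j) Prod.fst
        (fun p hp => by
          rw [hs, Finset.mem_coe, Finset.mem_filter, Finset.mem_product] at hp
          exact hp.1.1)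
        (fun p hp q hq hpq => by
          rw [hs, Finset.mem_coe, Finset.mem_filter] at hp hq
          have : p.2 = q.2 := by omega
          exact Prod.ext hpq this)
      simpa using this
    calc |∑ p ∈ s, (B * M ^ p.1 * B * M ^ p.2).trace|
        ≤ ∑ p ∈ s, |(B * M ^ p.1 * B * M ^ p.2).trace| := Finset.abs_sum_le_sum_abs _ _
      _ ≤ ∑ _p ∈ s, (c₁ ^ 2 * n) := Finset.sum_le_sum fun p _ => hTr p.1 p.2
      _ = s.card * (c₁ ^ 2 * n) := by rw [Finset.sum_const, nsmul_eq_mul]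
      _ ≤ j * (c₁ ^ 2 * n) := by
          refine mul_le_mul_of_nonneg_right ?_ (by positivity)
          exact_mod_cast hcard
      _ = (c₁ ^ 2 * n) * j := mul_comm _ _
  -- term bound
  have hterm : ∀ j : ℕ,
      ‖a j * ((j : ℂ) / 2) *
        ((∑ p ∈ (Finset.range j ×ˢ Finset.range j).filter (fun p => p.1 + p.2 + 2 = j),
          (B * M ^ p.1 * B * M ^ p.2).trace : ℝ) : ℂ)‖ ≤
      (c₁ ^ 2 * n) * ((j : ℝ) ^ 2 * ‖a j‖) := by
    intro j
    rw [norm_mul, norm_mul, Complex.norm_real, Real.norm_eq_abs, norm_div,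
      Complex.norm_natCast, Complex.norm_two]
    have h1 : ‖a j‖ * ((j : ℝ) / 2) *
        |(∑ p ∈ (Finset.range j ×ˢ Finset.range j).filter (fun p => p.1 + p.2 + 2 = j),
          (B * M ^ p.1 * B * M ^ p.2).trace)| ≤
        ‖a j‖ * ((j : ℝ) / 2) * ((c₁ ^ 2 * n) * j) := by
      refine mul_le_mul_of_nonneg_left (hS j) ?_
      positivity
    refine le_trans h1 ?_
    have hj : (0 : ℝ) ≤ (j : ℝ) := Nat.cast_nonneg j
    have ha : (0 : ℝ) ≤ ‖a j‖ := norm_nonneg _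
    have hcn : (0 : ℝ) ≤ c₁ ^ 2 * n := by positivity
    nlinarith [mul_nonneg (mul_nonneg ha hcn) (mul_nonneg hj hj)]
  -- summability of ∑ k² |a k|
  have hrpos : (0 : ℝ) < r := lt_trans one_pos hr
  have hg : Summable (fun k : ℕ => (k : ℝ) ^ 2 * ‖a k‖) := by
    have h1 : Summable (fun k : ℕ => (k : ℝ) ^ 2 * (r⁻¹) ^ k) :=
      summable_pow_mul_geometric_of_norm_lt_one 2
        (by rw [Real.norm_eq_abs, abs_of_pos (inv_pos.mpr hrpos)]
            exact inv_lt_one_of_one_lt₀ hr)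
    have h0 : Filter.Tendsto (fun k : ℕ => (k : ℝ) ^ 2 * (r⁻¹) ^ k)
        Filter.atTop (nhds 0) := h1.tendsto_atTop_zero
    have hO : (fun k : ℕ => (k : ℝ) ^ 2 * ‖a k‖) =O[Filter.atTop]
        (fun k : ℕ => ‖a k‖ * r ^ k) := by
      have heq : (fun k : ℕ => (k : ℝ) ^ 2 * ‖a k‖) =
          fun k : ℕ => ((k : ℝ) ^ 2 * (r⁻¹) ^ k) * (‖a k‖ * r ^ k) := by
        funext k
        have hrk : r ^ k * (r⁻¹) ^ k = 1 := by
          rw [← mul_pow, mul_inv_cancel₀ (ne_of_gt hrpos), one_pow]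
        rw [mul_mul_mul_comm, mul_comm ((r⁻¹) ^ k) _, hrk, mul_one]
      rw [heq]
      have := (h0.isBigO_one ℝ).mul
        (Asymptotics.isBigO_refl (fun k : ℕ => ‖a k‖ * r ^ k) Filter.atTop)
      simpa using this
    exact summable_of_isBigO hsum (Nat.cofinite_eq_atTop ▸ hO)
  -- summability of the terms
  have hsum_t : Summable (fun j : ℕ =>
      ‖a j * ((j : ℂ) / 2) *
        ((∑ p ∈ (Finset.range j ×ˢ Finset.range j).filter (fun p => p.1 + p.2 + 2 = j),
          (B * M ^ p.1 * B * M ^ p.2).trace : ℝ) : ℂ)‖) :=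
    Summable.of_nonneg_of_le (fun j => norm_nonneg _) hterm (hg.mul_left _)
  refine ⟨hsum_t, ?_⟩
  have hSnn : (0 : ℝ) ≤ ∑' k : ℕ, (k : ℝ) ^ 2 * ‖a k‖ :=
    tsum_nonneg fun k => by positivity
  rw [norm_mul, Complex.norm_real, Real.norm_eq_abs,
    abs_of_nonneg (inv_nonneg.mpr (Real.sqrt_nonneg _))]
  have habsT : ‖∑' j : ℕ, a j * ((j : ℂ) / 2) *
      ((∑ p ∈ (Finset.range j ×ˢ Finset.range j).filter (fun p => p.1 + p.2 + 2 = j),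
        (B * M ^ p.1 * B * M ^ p.2).trace : ℝ) : ℂ)‖ ≤
      (c₁ ^ 2 * n) * (∑' k : ℕ, (k : ℝ) ^ 2 * ‖a k‖) := by
    calc ‖∑' j : ℕ, a j * ((j : ℂ) / 2) *
          ((∑ p ∈ (Finset.range j ×ˢ Finset.range j).filter (fun p => p.1 + p.2 + 2 = j),
            (B * M ^ p.1 * B * M ^ p.2).trace : ℝ) : ℂ)‖ =
        ‖∑' j : ℕ, a j * ((j : ℂ) / 2) *
          ((∑ p ∈ (Finset.range j ×ˢ Finset.range j).filter (fun p => p.1 + p.2 + 2 = j),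
            (B * M ^ p.1 * B * M ^ p.2).trace : ℝ) : ℂ)‖ := rfl
      _ ≤ ∑' j : ℕ, ‖a j * ((j : ℂ) / 2) *
          ((∑ p ∈ (Finset.range j ×ˢ Finset.range j).filter (fun p => p.1 + p.2 + 2 = j),
            (B * M ^ p.1 * B * M ^ p.2).trace : ℝ) : ℂ)‖ :=
          norm_tsum_le_tsum_norm hsum_t
      _ = ∑' j : ℕ, ‖a j * ((j : ℂ) / 2) *
          ((∑ p ∈ (Finset.range j ×ˢ Finset.range j).filter (fun p => p.1 + p.2 + 2 = j),
            (B * M ^ p.1 * B * M ^ p.2).trace : ℝ) : ℂ)‖ := by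
          rfl
      _ ≤ ∑' j : ℕ, (c₁ ^ 2 * n) * ((j : ℝ) ^ 2 * ‖a j‖) :=
          Summable.tsum_le_tsum hterm hsum_t (hg.mul_left _)
      _ = (c₁ ^ 2 * n) * (∑' k : ℕ, (k : ℝ) ^ 2 * ‖a k‖) := tsum_mul_left
  have key : (Real.sqrt n)⁻¹ * (c₁ ^ 2 * n) ≤ c₁ ^ 2 * Real.sqrt n := by
    rcases Nat.eq_zero_or_pos n with h0 | h0
    · simp [h0]
    · have hs : (0 : ℝ) < Real.sqrt n := Real.sqrt_pos.mpr (by exact_mod_cast h0)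
      have h2 : (Real.sqrt n)⁻¹ * (n : ℝ) = Real.sqrt n := by
        rw [inv_mul_eq_div, eq_comm, eq_div_iff (ne_of_gt hs),
          Real.mul_self_sqrt (Nat.cast_nonneg n)]
      calc (Real.sqrt n)⁻¹ * (c₁ ^ 2 * n) = c₁ ^ 2 * ((Real.sqrt n)⁻¹ * n) := by ring
        _ ≤ c₁ ^ 2 * Real.sqrt n := le_of_eq (by rw [h2])
  calc (Real.sqrt n)⁻¹ * ‖∑' j : ℕ, a j * ((j : ℂ) / 2) *
        ((∑ p ∈ (Finset.range j ×ˢ Finset.range j).filter (fun p => p.1 + p.2 + 2 = j),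
          (B * M ^ p.1 * B * M ^ p.2).trace : ℝ) : ℂ)‖ ≤
      (Real.sqrt n)⁻¹ * ((c₁ ^ 2 * n) * (∑' k : ℕ, (k : ℝ) ^ 2 * ‖a k‖)) :=
        mul_le_mul_of_nonneg_left habsT (inv_nonneg.mpr (Real.sqrt_nonneg _))
    _ = ((Real.sqrt n)⁻¹ * (c₁ ^ 2 * n)) * (∑' k : ℕ, (k : ℝ) ^ 2 * ‖a k‖) := by
        ring
    _ ≤ (c₁ ^ 2 * Real.sqrt n) * (∑' k : ℕ, (k : ℝ) ^ 2 * ‖a k‖) :=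
        mul_le_mul_of_nonneg_right key hSnn
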